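/- With A as defined (c_k = 4·5^{k−1}, B_k = [5·5^{k−1}, 6·5^{k−1}−1], F_k = [10·5^{k−1}−1, 15·5^{k−1}], A = [2,3] ∪ ⋃_{k≥1}({c_k} ∪ B_k ∪ F_k)), set J_k = [9·5^{k−1}, 10·5^{k−1} − 1]. If n ∈ J_k and n = a + b with a, b ∈ A, then one of a, b equals c_k and the other lies in B_k. -/
import Mathlib


open Pointwise

def c (k : ℕ) : ℕ := 4 * 5 ^ (k - 1)
def B (k : ℕ) : Set ℕ := Set.Icc (5 * 5 ^ (k - 1)) (6 * 5 ^ (k - 1) - 1)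
def F (k : ℕ) : Set ℕ := Set.Icc (10 * 5 ^ (k - 1) - 1) (15 * 5 ^ (k - 1))
def A : Set ℕ := Set.Icc 2 3 ∪ ⋃ k ∈ {k : ℕ | 1 ≤ k}, ({c k} ∪ B k ∪ F k)

def J (k : ℕ) : Set ℕ := Set.Icc (9 * 5 ^ (k - 1)) (10 * 5 ^ (k - 1) - 1)

lemma A_ge_two {x : ℕ} (hx : x ∈ A) : 2 ≤ x := by
  simp only [A, Set.mem_union, Set.mem_iUnion, Set.mem_Icc, Set.mem_setOf_eq] at hx
  rcases hx with ⟨h1, _⟩ | ⟨j, hj, hx⟩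
  · exact h1
  · have hm : 1 ≤ 5 ^ (j - 1) := Nat.one_le_pow _ _ (by norm_num)
    simp only [Set.mem_union, Set.mem_singleton_iff, B, F, Set.mem_Icc, c] at hx
    rcases hx with (h | h) | h <;> omega

lemma classify (k : ℕ) (hk : 1 ≤ k) (x : ℕ) (hx : x ∈ A)
    (hlt : x < 10 * 5 ^ (k - 1) - 1) :
    x ≤ 3 * 5 ^ (k - 1) ∨ x = 4 * 5 ^ (k - 1) ∨
      (5 * 5 ^ (k - 1) ≤ x ∧ x ≤ 6 * 5 ^ (k - 1) - 1) := by
  have hm : 1 ≤ 5 ^ (k - 1) := Nat.one_le_pow _ _ (by norm_num)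
  simp only [A, Set.mem_union, Set.mem_iUnion, Set.mem_Icc, Set.mem_setOf_eq] at hx
  rcases hx with ⟨_, h2⟩ | ⟨j, hj, hx⟩
  · left; omega
  · have hmj : 1 ≤ 5 ^ (j - 1) := Nat.one_le_pow _ _ (by norm_num)
    simp only [Set.mem_union, Set.mem_singleton_iff, B, F, Set.mem_Icc, c] at hx
    rcases lt_trichotomy j k with hjk | rfl | hjk
    · have h5 : 5 * 5 ^ (j - 1) ≤ 5 ^ (k - 1) := by
        calc 5 * 5 ^ (j - 1) = 5 ^ j := by
              conv_rhs => rw [show j = (j - 1) + 1 by omega]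
              rw [pow_succ]; ring
          _ ≤ 5 ^ (k - 1) := Nat.pow_le_pow_right (by norm_num) (by omega)
      left
      rcases hx with (h | h) | h <;> omega
    · rcases hx with (h | h) | h
      · right; left; exact h
      · right; right; exact h
      · omega
    · have h5 : 5 * 5 ^ (k - 1) ≤ 5 ^ (j - 1) := by
        calc 5 * 5 ^ (k - 1) = 5 ^ k := by
              conv_rhs => rw [show k = (k - 1) + 1 by omega]
              rw [pow_succ]; ring
          _ ≤ 5 ^ (j - 1) := Nat.pow_le_pow_right (by norm_num) (by omega)
      rcases hx with (h | h) | h <;> omega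

theorem stmt_12 (k : ℕ) (hk : 1 ≤ k) (n a b : ℕ)
    (hn : n ∈ J k) (ha : a ∈ A) (hb : b ∈ A) (hab : n = a + b) :
    (a = c k ∧ b ∈ B k) ∨ (b = c k ∧ a ∈ B k) := by
  have hm : 1 ≤ 5 ^ (k - 1) := Nat.one_le_pow _ _ (by norm_num)
  simp only [J, Set.mem_Icc] at hn
  have ha2 := A_ge_two ha
  have hb2 := A_ge_two hb
  have hlta : a < 10 * 5 ^ (k - 1) - 1 := by omega
  have hltb : b < 10 * 5 ^ (k - 1) - 1 := by omega
  have ca := classify k hk a ha hlta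
  have cb := classify k hk b hb hltb
  simp only [B, c, Set.mem_Icc]
  omega
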